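/- Let 0 ≤ y_1 < x_1 < y_2 ≤ n, set a = y_1 + y_2 − x_1, and consider L = R^{NE}_{x_1−y_1} : V_{x_1} ⊗ V_a → V_{y_1} ⊗ V_{y_2}. Fix a subset Z ⊆ [1,x_1] with |Z| = y_1. Then for every A ⊆ {1,…,n} with |A| = a, the coefficient of x_Z ⊗ x_{[1,y_2]} in L(x_{[1,x_1]} ⊗ x_A) is nonzero if and only if A = Z ∪ (x_1,y_2], and in that case the coefficient is ε q^z for some sign ε ∈ {±1} and z ∈ ℤ. -/

import Mathlib

noncomputable section

/-- The base ring `R = ℤ[q,q⁻¹]`. -/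
abbrev R := LaurentPolynomial ℤ

/-- Index type for the basis of the "big" free module `⊕_p V_p`: all subsets of `{1,…,n}`. -/
abbrev F (n : ℕ) := Finset (Fin n)

/-- The free `R`-module `⊕_p V_p` with basis `x_S` for `S ⊆ {1,…,n}`; the submodule spanned
by the `x_S` with `|S| = p` is `V_p`. -/
abbrev Big (n : ℕ) := F n →₀ R

/-- The model of `(⊕ V_p) ⊗ (⊕ V_r)`, free on pairs of subsets. -/
abbrev Big2 (n : ℕ) := (F n × F n) →₀ R

/-- The model of a `d`-fold tensor product, free on `d`-tuples of subsets. -/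
abbrev BigD (n d : ℕ) := (Fin d → F n) →₀ R

/-- `ℓ(S,T) = #{(i,j) ∈ S × T : i < j}`. -/
def ell {n : ℕ} (S T : F n) : ℕ := ((S ×ˢ T).filter (fun p => p.1 < p.2)).card

/-- `(−q)^z` for `z : ℤ`. -/
def negqpow (z : ℤ) : R := (-1 : R) ^ z.natAbs * LaurentPolynomial.T z

/-- The merge map `M` : `x_S ⊗ x_T ↦ (−q)^{ℓ(S,T)} x_{S ∪ T}` if `S ∩ T = ∅`, else `0`.
On the graded piece `V_a ⊗ V_b` this is `M_{a,b}`. -/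
def mergeMap (n : ℕ) : Big2 n →ₗ[R] Big n :=
  Finsupp.lift (Big n) R (F n × F n)
    (fun p => if Disjoint p.1 p.2
      then Finsupp.single (p.1 ∪ p.2) (negqpow (ell p.1 p.2)) else 0)

/-- The split map taking the second tensor factor of size `c`:
`x_S ↦ (−1)^{(|S|−c)·c} Σ_{T ⊆ S, |T| = |S|−c} (−q)^{−ℓ(S∖T,T)} x_T ⊗ x_{S∖T}`.
On the graded piece `V_{a+c}` this is `M'_{a,c}`. -/
def splitR (n c : ℕ) : Big n →ₗ[R] Big2 n :=
  Finsupp.lift (Big2 n) R (F n)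
    (fun S => ((-1 : R) ^ ((S.card - c) * c)) •
      ∑ T ∈ S.powersetCard (S.card - c),
        Finsupp.single (T, S \ T) (negqpow (-(ell (S \ T) T : ℤ))))

/-- The split map taking the first tensor factor of size `c`:
`x_S ↦ (−1)^{c·(|S|−c)} Σ_{T ⊆ S, |T| = c} (−q)^{−ℓ(S∖T,T)} x_T ⊗ x_{S∖T}`.
On the graded piece `V_{c+b}` this is `M'_{c,b}`. -/
def splitL (n c : ℕ) : Big n →ₗ[R] Big2 n :=
  Finsupp.lift (Big2 n) R (F n)
    (fun S => ((-1 : R) ^ (c * (S.card - c))) •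
      ∑ T ∈ S.powersetCard c,
        Finsupp.single (T, S \ T) (negqpow (-(ell (S \ T) T : ℤ))))

/-- `f ⊗ id` in the free-module model. -/
def tensorId {α α' β : Type} (f : (α →₀ R) →ₗ[R] (α' →₀ R)) :
    ((α × β) →₀ R) →ₗ[R] ((α' × β) →₀ R) :=
  Finsupp.lift _ R _
    (fun p => Finsupp.mapDomain (fun a => (a, p.2)) (f (Finsupp.single p.1 1)))

/-- `id ⊗ f` in the free-module model. -/
def idTensor {α β β' : Type} (f : (β →₀ R) →ₗ[R] (β' →₀ R)) :
    ((α × β) →₀ R) →ₗ[R] ((α × β') →₀ R) :=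
  Finsupp.lift _ R _
    (fun p => Finsupp.mapDomain (fun b => (p.1, b)) (f (Finsupp.single p.2 1)))

/-- The canonical associator of the free-module model. -/
def assocMap (α β γ : Type) : (((α × β) × γ) →₀ R) ≃ₗ[R] ((α × (β × γ)) →₀ R) :=
  Finsupp.domLCongr (Equiv.prodAssoc α β γ)

/-- The northeast rung map `R^{NE}_c = (id ⊗ M_{c,r}) ∘ (M'_{p−c,c} ⊗ id) :
V_p ⊗ V_r → V_{p−c} ⊗ V_{r+c}` (assembled over all graded pieces). -/
def rungNE (n c : ℕ) : Big2 n →ₗ[R] Big2 n :=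
  (idTensor (mergeMap n)) ∘ₗ (assocMap (F n) (F n) (F n)).toLinearMap
    ∘ₗ (tensorId (splitR n c))

/-- The northwest rung map `R^{NW}_c = (M_{p,c} ⊗ id) ∘ (id ⊗ M'_{c,r−c}) :
V_p ⊗ V_r → V_{p+c} ⊗ V_{r−c}` (assembled over all graded pieces). -/
def rungNW (n c : ℕ) : Big2 n →ₗ[R] Big2 n :=
  (tensorId (mergeMap n)) ∘ₗ (assocMap (F n) (F n) (F n)).symm.toLinearMap
    ∘ₗ (idTensor (splitL n c))

/-- Apply a two-factor map `g` at the adjacent tensor positions `i, i+1` of a `d`-fold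
tensor product: `id^{⊗i} ⊗ g ⊗ id^{⊗(d−i−2)}` (the identity if `i+1 ≥ d`). -/
def atPos (n d i : ℕ) (g : Big2 n →ₗ[R] Big2 n) : BigD n d →ₗ[R] BigD n d :=
  if h : i + 1 < d then
    Finsupp.lift (BigD n d) R (Fin d → F n)
      (fun f => Finsupp.mapDomain
        (fun p => Function.update (Function.update f ⟨i, Nat.lt_of_succ_lt h⟩ p.1) ⟨i + 1, h⟩ p.2)
        (g (Finsupp.single (f ⟨i, Nat.lt_of_succ_lt h⟩, f ⟨i + 1, h⟩) 1)))
  else LinearMap.id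

/-- The subset of `Fin n` corresponding (0-based) to the 1-based interval
`(a, b] ⊆ {1,…,n}` (so `[1,m]` is `ico n 0 m`). -/
def ico (n a b : ℕ) : F n :=
  Finset.univ.filter (fun j => a ≤ (j : ℕ) ∧ (j : ℕ) < b)

end

open Finsupp LaurentPolynomial in
lemma lift_single' {X M : Type} [AddCommMonoid M] [Module R M] (g : X → M) (x : X) (r : R) :
    Finsupp.lift M R X g (Finsupp.single x r) = r • g x := by
  simp [Finsupp.lift_apply]

lemma merge_piece (n : ℕ) (T U A' : F n) :
    Finsupp.mapDomain (fun b => (T, b)) (mergeMap n (Finsupp.single (U, A') 1))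
      = if Disjoint U A' then Finsupp.single (T, U ∪ A') (negqpow (ell U A')) else 0 := by
  simp only [mergeMap, lift_single', one_smul]
  split <;> simp

lemma rungNE_single (n c : ℕ) (S A Z B : F n) :
    rungNE n c (Finsupp.single (S, A) 1) (Z, B)
      = ∑ T ∈ S.powersetCard (S.card - c),
          if T = Z ∧ Disjoint (S \ T) A ∧ (S \ T) ∪ A = B
          then (-1 : R) ^ ((S.card - c) * c) * negqpow (-(ell (S \ T) T : ℤ))
                * negqpow (ell (S \ T) A)
          else 0 := by
  simp only [rungNE, LinearMap.comp_apply, tensorId, splitR, lift_single', one_smul]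
  rw [Finsupp.mapDomain_smul, Finsupp.mapDomain_finset_sum]
  simp only [Finsupp.mapDomain_single, map_smul, map_sum]
  simp only [assocMap, LinearEquiv.coe_coe, Finsupp.domLCongr_apply, Finsupp.domCongr_apply,
    Finsupp.equivMapDomain_single, Equiv.prodAssoc_apply]
  simp only [idTensor, lift_single', merge_piece]
  simp only [Finsupp.smul_apply, Finsupp.finset_sum_apply,
    apply_ite (fun g : Big2 n => g (Z, B)), Finsupp.single_apply, Finsupp.coe_zero,
    Pi.zero_apply, smul_eq_mul]
  rw [Finset.mul_sum]
  refine Finset.sum_congr rfl fun T hT => ?_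
  by_cases hd : Disjoint (S \ T) A <;> by_cases he : (T, S \ T ∪ A) = (Z, B) <;>
    simp_all [Prod.ext_iff] <;> ring
lemma ico_card (n a b : ℕ) (hb : b ≤ n) : (ico n a b).card = b - a := by
  rw [← Nat.card_Ico a b]
  apply Finset.card_bij (fun (j : Fin n) _ => (j : ℕ))
  · intro j hj; simp [ico] at hj; simp [Finset.mem_Ico]; omega
  · intro j _ k _ h; exact Fin.val_injective h
  · intro k hk
    simp [Finset.mem_Ico] at hk
    exact ⟨⟨k, lt_of_lt_of_le hk.2 hb⟩, by simp [ico]; omega, rfl⟩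

lemma CT_form (m : ℕ) (z1 z2 : ℤ) :
    ∃ ε z : ℤ, (ε = 1 ∨ ε = -1) ∧
      (-1 : R) ^ m * negqpow z1 * negqpow z2 = LaurentPolynomial.C ε * LaurentPolynomial.T z ∧
      LaurentPolynomial.C ε * LaurentPolynomial.T z ≠ 0 := by
  refine ⟨(-1) ^ (m + z1.natAbs + z2.natAbs), z1 + z2,
    neg_one_pow_eq_or ℤ _, ?_, ?_⟩
  · have h1 : ((-1 : R)) = LaurentPolynomial.C (-1) := by simp
    rw [negqpow, negqpow, h1, ← map_pow, ← map_pow, ← map_pow,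
      LaurentPolynomial.T_add, pow_add, pow_add, map_mul, map_mul]
    ring
  · rw [← LaurentPolynomial.single_eq_C_mul_T]
    intro hC
    have h0 := AddMonoidAlgebra.single_eq_zero.mp hC
    rcases neg_one_pow_eq_or ℤ (m + z1.natAbs + z2.natAbs) with h | h <;> omega
lemma set_iff (n y1 x1 y2 : ℕ) (h1 : y1 < x1) (h2 : x1 < y2) (h3 : y2 ≤ n)
    (Z A : Finset (Fin n)) (hZ : Z ⊆ ico n 0 x1) :
    (Disjoint (ico n 0 x1 \ Z) A ∧ (ico n 0 x1 \ Z) ∪ A = ico n 0 y2) ↔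
      A = Z ∪ ico n x1 y2 := by
  have hZj : ∀ j, j ∈ Z → (j : ℕ) < x1 := fun j h => by
    have := hZ h; simp [ico] at this; exact this
  constructor
  · rintro ⟨hd, hu⟩
    have hA : A = ico n 0 y2 \ (ico n 0 x1 \ Z) := by
      rw [← hu, Finset.union_sdiff_cancel_left hd]
    rw [hA]; ext j
    by_cases hj : j ∈ Z
    · have := hZj j hj; simp [ico, hj]; omega
    · simp [ico, hj]; omega
  · rintro rfl
    constructor
    · rw [Finset.disjoint_left]
      intro j hjS hjA
      simp [ico] at hjS hjA
      rcases hjA with h | h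
      · exact hjS.2 h
      · omega
    · ext j
      by_cases hj : j ∈ Z
      · have := hZj j hj; simp [ico, hj]; omega
      · simp [ico, hj]; omega
/-- For `L = R^{NE}_{x₁−y₁} : V_{x₁} ⊗ V_a → V_{y₁} ⊗ V_{y₂}` and a fixed `Z ⊆ [1,x₁]` with
`|Z| = y₁`: for every `A` of size `a`, the coefficient of `x_Z ⊗ x_{[1,y₂]}` in
`L(x_{[1,x₁]} ⊗ x_A)` is nonzero iff `A = Z ∪ (x₁,y₂]`, in which case it is `ε q^z` for a
sign `ε` and `z ∈ ℤ`. -/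
theorem rung_coefficient_of_shifted_basis (n y1 x1 y2 : ℕ) (hn : 2 ≤ n)
    (h1 : y1 < x1) (h2 : x1 < y2) (h3 : y2 ≤ n)
    (a : ℕ) (ha : a = y1 + y2 - x1)
    (Z : Finset (Fin n)) (hZ : Z ⊆ ico n 0 x1) (hZcard : Z.card = y1) :
    ∀ A : Finset (Fin n), A.card = a →
      (((rungNE n (x1 - y1) (Finsupp.single (ico n 0 x1, A) 1)) (Z, ico n 0 y2) ≠ 0)
          ↔ A = Z ∪ ico n x1 y2) ∧
      (A = Z ∪ ico n x1 y2 →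
        ∃ ε z : ℤ, (ε = 1 ∨ ε = -1) ∧
          (rungNE n (x1 - y1) (Finsupp.single (ico n 0 x1, A) 1)) (Z, ico n 0 y2)
            = LaurentPolynomial.C ε * LaurentPolynomial.T z) := by
  intro A hAcard
  set S := ico n 0 x1 with hS
  have hx1n : x1 ≤ n := le_trans h2.le h3
  have hSc : S.card = x1 := by rw [hS, ico_card n 0 x1 hx1n]; omega
  have hZmem : Z ∈ S.powersetCard (S.card - (x1 - y1)) := by
    rw [Finset.mem_powersetCard]; exact ⟨hZ, by omega⟩
  have key : rungNE n (x1 - y1) (Finsupp.single (S, A) 1) (Z, ico n 0 y2)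
      = if Disjoint (S \ Z) A ∧ (S \ Z) ∪ A = ico n 0 y2
        then (-1 : R) ^ ((S.card - (x1 - y1)) * (x1 - y1)) * negqpow (-(ell (S \ Z) Z : ℤ))
              * negqpow (ell (S \ Z) A)
        else 0 := by
    rw [rungNE_single, Finset.sum_eq_single_of_mem Z hZmem]
    · simp only [eq_self_iff_true, true_and]
    · intro T hT hne
      rw [if_neg]
      simp [hne]
  have hiff := set_iff n y1 x1 y2 h1 h2 h3 Z A hZ
  obtain ⟨ε, z, hε, heq, hne0⟩ := CT_form ((S.card - (x1 - y1)) * (x1 - y1))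
    (-(ell (S \ Z) Z : ℤ)) (ell (S \ Z) A : ℤ)
  constructor
  · rw [key]
    constructor
    · intro h
      by_contra hA'
      exact h (if_neg (fun hc => hA' (hiff.1 hc)))
    · intro hA'
      rw [if_pos (hiff.2 hA'), heq]
      exact hne0
  · intro hA'
    rw [key, if_pos (hiff.2 hA'), heq]
    exact ⟨ε, z, hε, rfl⟩
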